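/- (q-Lucas theorem) Let d > 1 be a positive integer and let a, b, s, t be integers with 0 ≤ b, t ≤ d−1. Then qbinom(ad+b, sd+t) ≡ C(a,s) · qbinom(b,t) (mod Φ_d(q)) in ℤ[q]. -/

import Mathlib

open scoped Polynomial

/-- The `q`-integer `[m] = (1 − q^m)/(1 − q)` for an arbitrary integer `m`, in `ℚ(q)`. -/
noncomputable def qi (m : ℤ) : RatFunc ℚ := (1 - RatFunc.X ^ m) / (1 - RatFunc.X)

/-- The Gaussian binomial coefficient `qbinom(a,j) = ∏_{i=1}^{j} [a−i+1] / ∏_{i=1}^{j} [i]`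
for integer indices (zero when the lower index is negative), in `ℚ(q)`. -/
noncomputable def qbZ (a j : ℤ) : RatFunc ℚ :=
  if j < 0 then 0
  else (∏ i ∈ Finset.range j.toNat, qi (a - i)) / ∏ i ∈ Finset.range j.toNat, qi (i + 1)

/-- The ordinary binomial coefficient `C(a,s)` for integer indices
(zero when the lower index is negative). -/
noncomputable def ichoose (a s : ℤ) : ℤ := if s < 0 then 0 else Ring.choose a s.toNat

namespace QL
open Polynomial Finset

noncomputable def ι : ℤ[X] →+* RatFunc ℚ :=
  (algebraMap ℚ[X] (RatFunc ℚ)).comp (Polynomial.mapRingHom (Int.castRingHom ℚ))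

lemma ι_injective : Function.Injective ι :=
  (RatFunc.algebraMap_injective ℚ).comp (Polynomial.map_injective _ Int.cast_injective)

lemma ι_X : ι X = RatFunc.X := by
  simp [ι, RatFunc.algebraMap_X]

noncomputable def F (n : ℕ) : ℤ[X] := 1 - X ^ n

noncomputable def fL (z : ℤ) : RatFunc ℚ := 1 - RatFunc.X ^ z

lemma X_ne : (RatFunc.X : RatFunc ℚ) ≠ 0 := RatFunc.X_ne_zero

lemma ι_F (n : ℕ) : ι (F n) = fL n := by
  simp [F, fL, map_sub, map_pow, ι_X, zpow_natCast]

lemma F_ne_zero {n : ℕ} (h : 0 < n) : F n ≠ 0 := by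
  intro hF
  have := congrArg (fun p => Polynomial.eval 0 p) hF
  simp [F, zero_pow h.ne'] at this

lemma fL_nat_ne_zero {n : ℕ} (h : 0 < n) : fL (n : ℤ) ≠ 0 := by
  rw [← ι_F]
  exact fun hc => F_ne_zero h (ι_injective (by simpa using hc))

lemma fL_zero : fL 0 = 0 := by simp [fL]

lemma fL_neg (z : ℤ) : fL z = -RatFunc.X ^ z * fL (-z) := by
  simp only [fL, mul_sub, neg_mul, mul_one]
  rw [← zpow_add₀ X_ne]
  simp only [add_neg_cancel, zpow_zero]
  ring

noncomputable def gb : ℕ → ℕ → ℤ[X]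
  | _, 0 => 1
  | 0, _ + 1 => 0
  | n + 1, k + 1 => gb n k + X ^ (k + 1) * gb n (k + 1)

lemma gb_zero_right (n : ℕ) : gb n 0 = 1 := by cases n <;> rfl

lemma gb_eq_zero : ∀ {n k : ℕ}, n < k → gb n k = 0
  | _, 0, h => absurd h (by omega)
  | 0, k + 1, _ => rfl
  | n + 1, k + 1, h => by
      rw [gb, gb_eq_zero (by omega), gb_eq_zero (by omega)]
      simp

lemma gb_spec : ∀ (n k : ℕ),
    (∏ i ∈ range k, F (n - i)) = gb n k * ∏ i ∈ range k, F (i + 1)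
  | n, 0 => by simp [gb_zero_right]
  | 0, k + 1 => by
      rw [gb_eq_zero (by omega), zero_mul]
      refine Finset.prod_eq_zero (mem_range.2 (Nat.succ_pos k)) ?_
      simp [F]
  | n + 1, k + 1 => by
      have hsplit : (∏ i ∈ range (k + 1), F (n + 1 - i))
          = (∏ i ∈ range k, F (n - i)) * F (n + 1) := by
        rw [Finset.prod_range_succ']
        congr 1
        refine Finset.prod_congr rfl fun i _ => ?_
        congr 1
        omega
      rw [hsplit]
      by_cases hkn : k ≤ n
      · have hid : F (n + 1) = F (k + 1) + X ^ (k + 1) * F (n - k) := by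
          simp only [F, mul_sub, mul_one]
          rw [← pow_add, show k + 1 + (n - k) = n + 1 by omega]
          ring
        have e1 : (∏ i ∈ range k, F (n - i)) * F (k+1)
            = gb n k * ∏ i ∈ range (k+1), F (i+1) := by
          rw [gb_spec n k, Finset.prod_range_succ]; ring
        have e2 : (∏ i ∈ range k, F (n - i)) * (X ^ (k+1) * F (n-k))
            = X ^ (k+1) * (gb n (k+1) * ∏ i ∈ range (k+1), F (i+1)) := by
          rw [← gb_spec n (k+1), Finset.prod_range_succ]; ring
        rw [hid, mul_add, e1, e2, gb]; ring
      · have h1 : (∏ i ∈ range k, F (n - i)) = 0 := by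
          refine Finset.prod_eq_zero (mem_range.2 (show n < k by omega)) ?_
          simp [F]
        rw [h1, gb_eq_zero (by omega)]
        simp

end QL

namespace QL
open Polynomial Finset

/-- integer Laurent polynomial -/
def IsL (x : RatFunc ℚ) : Prop := ∃ (p : ℤ[X]) (e : ℕ), x * RatFunc.X ^ e = ι p

/-- congruence mod `Φ_d` among integer Laurent polynomials -/
def LC (d : ℕ) (x y : RatFunc ℚ) : Prop :=
  ∃ (p : ℤ[X]) (e : ℕ), (x - y) * RatFunc.X ^ e = ι (Polynomial.cyclotomic d ℤ * p)

lemma X_pow_eq (e : ℕ) : (RatFunc.X : RatFunc ℚ) ^ e = ι (X ^ e) := by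
  rw [map_pow, ι_X]

lemma isL_iota (p : ℤ[X]) : IsL (ι p) := ⟨p, 0, by simp⟩

lemma isL_zero : IsL 0 := ⟨0, 0, by simp⟩

lemma isL_one : IsL 1 := ⟨1, 0, by simp⟩

lemma isL_mul {x y : RatFunc ℚ} (hx : IsL x) (hy : IsL y) : IsL (x * y) := by
  obtain ⟨p, e, hp⟩ := hx
  obtain ⟨q, f, hq⟩ := hy
  exact ⟨p * q, e + f, by rw [pow_add, map_mul, ← hp, ← hq]; ring⟩

lemma isL_neg {x : RatFunc ℚ} (hx : IsL x) : IsL (-x) := by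
  obtain ⟨p, e, hp⟩ := hx
  exact ⟨-p, e, by rw [map_neg, ← hp]; ring⟩

lemma isL_X_zpow (z : ℤ) : IsL (RatFunc.X ^ z) := by
  rcases le_or_gt 0 z with h | h
  · exact ⟨X ^ z.toNat, 0, by
      rw [pow_zero, mul_one, map_pow, ι_X, ← zpow_natCast, Int.toNat_of_nonneg h]⟩
  · refine ⟨1, (-z).toNat, ?_⟩
    rw [← zpow_natCast (RatFunc.X : RatFunc ℚ) (-z).toNat, ← zpow_add₀ X_ne,
      Int.toNat_of_nonneg (by omega), add_neg_cancel, zpow_zero, map_one]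

lemma isL_fL (z : ℤ) : IsL (fL z) := by
  rcases le_or_gt 0 z with h | h
  · rw [show z = (z.toNat : ℤ) by omega, ← ι_F]; exact isL_iota _
  · rw [fL_neg]
    refine isL_mul (isL_neg (isL_X_zpow z)) ?_
    rw [show -z = ((-z).toNat : ℤ) by omega, ← ι_F]
    exact isL_iota _

lemma isL_prod {n : ℕ} {f : ℕ → RatFunc ℚ} (h : ∀ i, i < n → IsL (f i)) :
    IsL (∏ i ∈ range n, f i) := by
  induction n with
  | zero => simpa using isL_one
  | succ n ih =>
      rw [Finset.prod_range_succ]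
      exact isL_mul (ih fun i hi => h i (by omega)) (h n (by omega))

lemma lc_refl (d : ℕ) (x : RatFunc ℚ) : LC d x x := ⟨0, 0, by simp⟩

lemma lc_symm {d : ℕ} {x y : RatFunc ℚ} (h : LC d x y) : LC d y x := by
  obtain ⟨p, e, hp⟩ := h
  refine ⟨-p, e, ?_⟩
  rw [show (y - x) * RatFunc.X ^ e = -((x - y) * RatFunc.X ^ e) by ring, hp, ← map_neg]
  congr 1
  ring

lemma lc_trans {d : ℕ} {x y z : RatFunc ℚ} (h1 : LC d x y) (h2 : LC d y z) : LC d x z := by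
  obtain ⟨p, e, hp⟩ := h1
  obtain ⟨q, f, hq⟩ := h2
  refine ⟨p * X ^ f + q * X ^ e, e + f, ?_⟩
  have : (x - z) * RatFunc.X ^ (e + f)
      = ((x - y) * RatFunc.X ^ e) * RatFunc.X ^ f + ((y - z) * RatFunc.X ^ f) * RatFunc.X ^ e := by
    rw [pow_add]; ring
  rw [this, hp, hq, X_pow_eq, X_pow_eq, ← map_mul, ← map_mul, ← map_add]
  congr 1
  ring

lemma lc_of_dvd {d : ℕ} {p q : ℤ[X]} (h : Polynomial.cyclotomic d ℤ ∣ p - q) :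
    LC d (ι p) (ι q) := by
  obtain ⟨c, hc⟩ := h
  exact ⟨c, 0, by rw [pow_zero, mul_one, ← map_sub, hc]⟩

lemma lc_mul {d : ℕ} {x y u v : RatFunc ℚ} (h1 : LC d x y) (h2 : LC d u v)
    (hu : IsL u) (hy : IsL y) : LC d (x * u) (y * v) := by
  obtain ⟨p1, e1, hp1⟩ := h1
  obtain ⟨p2, e2, hp2⟩ := h2
  obtain ⟨U, eu, hU⟩ := hu
  obtain ⟨Y, ey, hY⟩ := hy
  refine ⟨p1 * U * X ^ (e2 + ey) + p2 * Y * X ^ (e1 + eu), e1 + eu + (e2 + ey), ?_⟩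
  have key : (x * u - y * v) * RatFunc.X ^ (e1 + eu + (e2 + ey))
      = (((x - y) * RatFunc.X ^ e1) * (u * RatFunc.X ^ eu)) * RatFunc.X ^ (e2 + ey)
        + (((u - v) * RatFunc.X ^ e2) * (y * RatFunc.X ^ ey)) * RatFunc.X ^ (e1 + eu) := by
    rw [pow_add, pow_add, pow_add]; ring
  rw [key, hp1, hp2, hU, hY, X_pow_eq, X_pow_eq, ← map_mul, ← map_mul, ← map_mul, ← map_mul,
    ← map_add]
  congr 1
  ring

lemma lc_mul_const {d : ℕ} {x y : RatFunc ℚ} (c : RatFunc ℚ) (h : LC d x y)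
    (hc : IsL c) (hy : IsL y) : LC d (x * c) (y * c) :=
  lc_mul h (lc_refl d c) hc hy

lemma lc_dvd_zero {d : ℕ} {q : ℤ[X]} (h : Polynomial.cyclotomic d ℤ ∣ q) {w : RatFunc ℚ}
    (hw : IsL w) : LC d (ι q * w) 0 := by
  obtain ⟨c, hc⟩ := h
  obtain ⟨W, e, hW⟩ := hw
  refine ⟨c * W, e, ?_⟩
  rw [sub_zero, mul_assoc, hW, ← map_mul, hc]
  congr 1
  ring

lemma lc_prod {d : ℕ} {n : ℕ} {f : ℕ → RatFunc ℚ} {g : ℕ → ℤ[X]}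
    (h : ∀ i, i < n → LC d (f i) (ι (g i)) ∧ IsL (f i)) :
    LC d (∏ i ∈ range n, f i) (ι (∏ i ∈ range n, g i)) := by
  induction n with
  | zero => simpa using lc_refl d 1
  | succ n ih =>
      rw [Finset.prod_range_succ, Finset.prod_range_succ, map_mul]
      exact lc_mul (ih fun i hi => h i (by omega)) (h n (by omega)).1
        (h n (by omega)).2 (isL_iota _)

end QL

namespace QL
open Polynomial Finset

section D
variable {d : ℕ}

lemma phi_prime (hd : 1 < d) : Prime (Polynomial.cyclotomic d ℤ) :=
  UniqueFactorizationMonoid.irreducible_iff_prime.mp (cyclotomic.irreducible (by omega))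

lemma phi_prime_rat (hd : 1 < d) : Prime (Polynomial.cyclotomic d ℚ) :=
  UniqueFactorizationMonoid.irreducible_iff_prime.mp (cyclotomic.irreducible_rat (by omega))

lemma phi_dvd_F_mul (k : ℕ) : Polynomial.cyclotomic d ℤ ∣ F (k * d) := by
  have h1 : Polynomial.cyclotomic d ℤ ∣ X ^ d - 1 := cyclotomic.dvd_X_pow_sub_one d ℤ
  have h2 : (X : ℤ[X]) ^ d - 1 ∣ (X ^ d) ^ k - 1 ^ k := sub_dvd_pow_sub_pow _ _ k
  rw [one_pow, ← pow_mul, mul_comm d k] at h2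
  have h3 : F (k * d) = -(X ^ (k * d) - 1) := by simp [F]
  rw [h3]
  exact (h1.trans h2).neg_right

/-- geometric sum with step `d`. -/
noncomputable def σp (d n : ℕ) : ℤ[X] := ∑ i ∈ range n, (X ^ d) ^ i

lemma F_mul_sigma (n : ℕ) : F d * σp d n = F (n * d) := by
  have h := geom_sum_mul ((X : ℤ[X]) ^ d) n
  rw [← pow_mul, mul_comm d n] at h
  simp only [F, σp]
  calc (1 - X ^ d) * ∑ i ∈ range n, (X ^ d) ^ i
      = -((∑ i ∈ range n, ((X:ℤ[X]) ^ d) ^ i) * (X ^ d - 1)) := by ring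
    _ = 1 - X ^ (n * d) := by rw [h]; ring

lemma phi_dvd_sigma_sub (n : ℕ) :
    Polynomial.cyclotomic d ℤ ∣ σp d n - (n : ℤ[X]) := by
  have h : σp d n - (n : ℤ[X]) = ∑ i ∈ range n, ((X ^ d) ^ i - 1) := by
    rw [Finset.sum_sub_distrib]
    simp [σp]
  rw [h]
  refine Finset.dvd_sum fun i _ => ?_
  have h2 := phi_dvd_F_mul (d := d) i
  have hF : ((X : ℤ[X]) ^ d) ^ i - 1 = -F (i * d) := by
    simp [F, pow_mul, mul_comm]
  rw [hF]
  exact h2.neg_right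

lemma fL_d_ne_zero (hd : 1 < d) : fL (d : ℤ) ≠ 0 := fL_nat_ne_zero (by omega)

/-- `(1 - q^{kd})/(1 - q^d)`. -/
noncomputable def GLq (d : ℕ) (k : ℤ) : RatFunc ℚ := fL (k * d) / fL (d : ℤ)

lemma fL_eq_GLq (hd : 1 < d) (k : ℤ) : fL (k * d) = fL (d : ℤ) * GLq d k := by
  rw [GLq, mul_div_cancel₀]
  exact fL_d_ne_zero hd

lemma GLq_natCast (hd : 1 < d) (n : ℕ) : GLq d (n : ℤ) = ι (σp d n) := by
  have h1 : fL ((n : ℤ) * d) = fL (d : ℤ) * ι (σp d n) := by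
    have h0 : ((n : ℤ) * d) = ((n * d : ℕ) : ℤ) := by push_cast; ring
    rw [h0, ← ι_F, ← F_mul_sigma, map_mul, ι_F]
  rw [GLq, h1, mul_comm, mul_div_assoc, div_self (fL_d_ne_zero hd), mul_one]

lemma GLq_neg_eq (hd : 1 < d) (n : ℕ) :
    GLq d (-(n : ℤ)) = -RatFunc.X ^ ((-(n : ℤ)) * d) * ι (σp d n) := by
  rw [GLq, fL_neg ((-(n : ℤ)) * d)]
  have h0 : -((-(n : ℤ)) * d) = ((n * d : ℕ) : ℤ) := by push_cast; ring
  rw [h0, ← ι_F, ← F_mul_sigma, map_mul, ι_F]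
  rw [mul_comm (fL ((d:ℕ) : ℤ)) (ι (σp d n)), ← mul_assoc, mul_div_assoc,
    div_self (fL_d_ne_zero hd), mul_one]

lemma lc_neg {x y : RatFunc ℚ} (h : LC d x y) : LC d (-x) (-y) := by
  obtain ⟨p, e, hp⟩ := h
  refine ⟨-p, e, ?_⟩
  rw [show (-x - -y) * RatFunc.X ^ e = -((x - y) * RatFunc.X ^ e) by ring, hp, ← map_neg]
  congr 1
  ring

lemma lc_X_zpow_mul_d (hd : 1 < d) (k : ℤ) : LC d (RatFunc.X ^ (k * d)) 1 := by
  rcases le_or_gt 0 k with h | h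
  · obtain ⟨n, rfl⟩ : ∃ n : ℕ, k = (n : ℤ) := ⟨k.toNat, by omega⟩
    obtain ⟨c, hc⟩ := phi_dvd_F_mul (d := d) n
    refine ⟨-c, 0, ?_⟩
    have h1 : ι (Polynomial.cyclotomic d ℤ * -c) = -fL ((n * d : ℕ) : ℤ) := by
      rw [← ι_F, ← map_neg, hc]
      congr 1
      ring
    rw [pow_zero, mul_one, h1]
    have h2 : ((n * d : ℕ) : ℤ) = (n : ℤ) * d := by push_cast; ring
    rw [h2, fL]
    ring
  · obtain ⟨n, rfl⟩ : ∃ n : ℕ, k = -(n : ℤ) := ⟨(-k).toNat, by omega⟩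
    obtain ⟨c, hc⟩ := phi_dvd_F_mul (d := d) n
    refine ⟨c, n * d, ?_⟩
    rw [← hc, ι_F, fL]
    have he : ((n * d : ℕ) : ℤ) = -(-(n : ℤ) * d) := by push_cast; ring
    rw [← zpow_natCast (RatFunc.X : RatFunc ℚ) (n * d), he]
    rw [sub_mul, one_mul, ← zpow_add₀ X_ne, add_neg_cancel, zpow_zero]

lemma lc_GLq (hd : 1 < d) (k : ℤ) : LC d (GLq d k) (ι (k : ℤ[X])) := by
  rcases le_or_gt 0 k with h | h
  · obtain ⟨n, rfl⟩ : ∃ n : ℕ, k = (n : ℤ) := ⟨k.toNat, by omega⟩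
    rw [GLq_natCast hd]
    refine lc_of_dvd ?_
    have h2 := phi_dvd_sigma_sub (d := d) n
    have h3 : (((n : ℤ)) : ℤ[X]) = ((n : ℕ) : ℤ[X]) := by push_cast; ring
    rw [h3]
    exact h2
  · obtain ⟨n, rfl⟩ : ∃ n : ℕ, k = -(n : ℤ) := ⟨(-k).toNat, by omega⟩
    rw [GLq_neg_eq hd]
    have h2 : LC d (-RatFunc.X ^ ((-(n:ℤ)) * d)) (ι (-1 : ℤ[X])) := by
      have h2' := lc_neg (d := d) (lc_X_zpow_mul_d hd (-(n:ℤ)))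
      simpa using h2'
    have h3 : LC d (ι (σp d n)) (ι ((n : ℤ[X]))) := by
      refine lc_of_dvd ?_
      exact phi_dvd_sigma_sub (d := d) n
    have h4 := lc_mul h2 h3 (isL_iota _) (isL_iota _)
    rw [← map_mul] at h4
    have he : (-1 : ℤ[X]) * ((n : ℤ[X])) = ((-(n:ℤ) : ℤ) : ℤ[X]) := by
      push_cast
      ring
    rwa [he] at h4

lemma isL_GLq (hd : 1 < d) (k : ℤ) : IsL (GLq d k) := by
  rcases le_or_gt 0 k with h | h
  · obtain ⟨n, rfl⟩ : ∃ n : ℕ, k = (n : ℤ) := ⟨k.toNat, by omega⟩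
    rw [GLq_natCast hd]; exact isL_iota _
  · obtain ⟨n, rfl⟩ : ∃ n : ℕ, k = -(n : ℤ) := ⟨(-k).toNat, by omega⟩
    rw [GLq_neg_eq hd]
    exact isL_mul (isL_neg (isL_X_zpow _)) (isL_iota _)

end D
end QL

namespace QL
open Polynomial Finset

section D2
variable {d : ℕ}

lemma phi_not_dvd_X_pow (hd : 1 < d) (e : ℕ) : ¬ Polynomial.cyclotomic d ℤ ∣ X ^ e := by
  intro h
  rcases Nat.eq_zero_or_pos e with rfl | he
  · rw [pow_zero] at h
    exact (phi_prime hd).not_unit (isUnit_of_dvd_one h)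
  · have hX : Polynomial.cyclotomic d ℤ ∣ X := (phi_prime hd).dvd_of_dvd_pow h
    have hdeg : (Polynomial.cyclotomic d ℤ).natDegree ≤ 1 := by
      simpa using Polynomial.natDegree_le_of_dvd hX Polynomial.X_ne_zero
    rw [Polynomial.natDegree_cyclotomic] at hdeg
    have hpos : 0 < d.totient := Nat.totient_pos.mpr (by omega)
    have h1 : d.totient = 1 := by omega
    have hd2 : d = 2 := by
      rcases Nat.totient_eq_one_iff.mp h1 with h' | h' <;> omega
    subst hd2
    rw [Polynomial.cyclotomic_two] at hX
    obtain ⟨c, hc⟩ := hX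
    have := congrArg (Polynomial.eval (-1)) hc
    simp at this

lemma phi_not_dvd_F (hd : 1 < d) {r : ℕ} (h1 : 0 < r) (h2 : r < d) :
    ¬ Polynomial.cyclotomic d ℤ ∣ F r := by
  intro h
  have hq : Polynomial.cyclotomic d ℚ ∣ (F r).map (Int.castRingHom ℚ) := by
    have := Polynomial.map_dvd (Int.castRingHom ℚ) h
    rwa [map_cyclotomic_int] at this
  have hprod : (F r).map (Int.castRingHom ℚ) = -(X ^ r - 1) := by
    simp [F]
  rw [hprod, dvd_neg, ← Polynomial.prod_cyclotomic_eq_X_pow_sub_one h1 ℚ] at hq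
  obtain ⟨e, he, hdvd⟩ := (phi_prime_rat hd).exists_mem_finset_dvd hq
  have hassoc : Associated (Polynomial.cyclotomic d ℚ) (Polynomial.cyclotomic e ℚ) := by
    refine Irreducible.associated_of_dvd (cyclotomic.irreducible_rat (by omega)) ?_ hdvd
    exact cyclotomic.irreducible_rat (Nat.pos_of_mem_divisors he)
  have heq : Polynomial.cyclotomic d ℚ = Polynomial.cyclotomic e ℚ :=
    Polynomial.eq_of_monic_of_associated (cyclotomic.monic d ℚ) (cyclotomic.monic e ℚ) hassoc
  have hde : d = e := Polynomial.cyclotomic_injective heq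
  subst hde
  exact absurd (Nat.divisor_le he) (by omega)

lemma phi_not_dvd_intCast (hd : 1 < d) {m : ℤ} (hm : m ≠ 0) :
    ¬ Polynomial.cyclotomic d ℤ ∣ (m : ℤ[X]) := by
  intro h
  have hdeg : (Polynomial.cyclotomic d ℤ).natDegree ≤ 0 := by
    have h0 : (m : ℤ[X]) ≠ 0 := Int.cast_ne_zero.mpr hm
    have := Polynomial.natDegree_le_of_dvd h h0
    simpa using this
  rw [Polynomial.natDegree_cyclotomic] at hdeg
  exact absurd (Nat.totient_pos.mpr (by omega : 0 < d)).ne' (by omega)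

/-- Cancellation of a factor coprime to `Φ_d`. -/
lemma lc_cancel (hd : 1 < d) {x y u : RatFunc ℚ} {V : ℤ[X]}
    (hx : IsL x) (hy : IsL y) (hu : IsL u)
    (huV : LC d u (ι V)) (hV : ¬ Polynomial.cyclotomic d ℤ ∣ V)
    (h : LC d (x * u) (y * u)) : LC d x y := by
  obtain ⟨U, eu, hU⟩ := hu
  have hUc : ¬ Polynomial.cyclotomic d ℤ ∣ U := by
    intro hdvdU
    obtain ⟨p1, e1, hp1⟩ := huV
    have key2 : ι (U * X ^ e1 - V * X ^ (eu + e1)) = ι (Polynomial.cyclotomic d ℤ * p1 * X ^ eu) := by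
      have e2 : ι (U * X ^ e1 - V * X ^ (eu + e1))
          = ι U * RatFunc.X ^ e1 - ι V * RatFunc.X ^ (eu + e1) := by
        rw [map_sub, map_mul, map_mul, X_pow_eq, X_pow_eq]
      have e3 : ι (Polynomial.cyclotomic d ℤ * p1 * X ^ eu)
          = ι (Polynomial.cyclotomic d ℤ * p1) * RatFunc.X ^ eu := by
        rw [map_mul, X_pow_eq]
      rw [e2, e3, ← hU, ← hp1, pow_add]
      ring
    have hkey := ι_injective key2
    have hdv : Polynomial.cyclotomic d ℤ ∣ V * X ^ (eu + e1) := by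
      have hrw : (V * X ^ (eu + e1) : ℤ[X])
          = U * X ^ e1 - (U * X ^ e1 - V * X ^ (eu + e1)) := by ring
      rw [hrw, hkey]
      exact dvd_sub (hdvdU.mul_right _) ⟨p1 * X ^ eu, by ring⟩
    rcases (phi_prime hd).2.2 _ _ hdv with h' | h'
    · exact hV h'
    · exact phi_not_dvd_X_pow hd _ h'
  obtain ⟨p1, e1, hp1⟩ := h
  obtain ⟨Px, ex, hPx⟩ := hx
  obtain ⟨Py, ey, hPy⟩ := hy
  set F0 : ℤ[X] := Px * X ^ ey - Py * X ^ ex with hF0def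
  have hF0 : (x - y) * RatFunc.X ^ (ex + ey) = ι F0 := by
    rw [hF0def, map_sub, map_mul, map_mul, ← X_pow_eq, ← X_pow_eq, ← hPx, ← hPy, pow_add]
    ring
  have hmain : ι (F0 * U * X ^ e1) = ι (Polynomial.cyclotomic d ℤ * p1 * X ^ (ex + ey + eu)) := by
    have e2 : ι (F0 * U * X ^ e1) = ι F0 * ι U * RatFunc.X ^ e1 := by
      rw [map_mul, map_mul, X_pow_eq]
    have e3 : ι (Polynomial.cyclotomic d ℤ * p1 * X ^ (ex + ey + eu))
        = ι (Polynomial.cyclotomic d ℤ * p1) * RatFunc.X ^ (ex + ey + eu) := by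
      rw [map_mul, X_pow_eq]
    rw [e2, e3, ← hF0, ← hU, ← hp1, pow_add, pow_add]
    ring
  have hmain' := ι_injective hmain
  have hdvdF0 : Polynomial.cyclotomic d ℤ ∣ F0 * U * X ^ e1 := by
    rw [hmain']
    exact ⟨p1 * X ^ (ex + ey + eu), by ring⟩
  have hdvd : Polynomial.cyclotomic d ℤ ∣ F0 := by
    rcases (phi_prime hd).2.2 _ _ hdvdF0 with h' | h'
    · rcases (phi_prime hd).2.2 _ _ h' with h'' | h''
      · exact h''
      · exact absurd h'' hUc
    · exact absurd h' (phi_not_dvd_X_pow hd _)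
  obtain ⟨c, hc⟩ := hdvd
  exact ⟨c, ex + ey, by rw [hF0, hc, map_mul]⟩

end D2
end QL

namespace QL
open Polynomial Finset

section ML
variable {d : ℕ}

noncomputable def Wpoly (d : ℕ) : ℤ[X] := ∏ r ∈ range (d - 1), F (r + 1)

lemma lc_fL_int (hd : 1 < d) (K : ℤ) (n : ℕ) : LC d (fL (K * d + n)) (ι (F n)) := by
  obtain ⟨p, e, hp⟩ := lc_X_zpow_mul_d hd K
  refine ⟨-X ^ n * p, e, ?_⟩
  have h1 : fL (K * d + n) - ι (F n) = -RatFunc.X ^ (n : ℤ) * (RatFunc.X ^ (K * d) - 1) := by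
    rw [ι_F, fL, fL, zpow_add₀ X_ne]
    ring
  have h2 : ι (Polynomial.cyclotomic d ℤ * (-X ^ n * p))
      = -RatFunc.X ^ (n : ℤ) * ι (Polynomial.cyclotomic d ℤ * p) := by
    rw [show Polynomial.cyclotomic d ℤ * (-X ^ n * p)
        = -(X ^ n) * (Polynomial.cyclotomic d ℤ * p) by ring, map_mul, map_neg, map_pow, ι_X,
      zpow_natCast]
  rw [h1, h2, ← hp]
  ring

lemma ML (hd : 1 < d) (K : ℤ) (c t : ℕ) (hct : c + t + 1 ≤ d) (s : ℕ) :
    ∃ R : RatFunc ℚ,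
      (∏ i ∈ range (s * d + t), fL (K * d + c + 1 + i))
        = (∏ m ∈ range s, fL ((K + m + 1) * d)) * R
      ∧ IsL R
      ∧ LC d R (ι (Wpoly d ^ s * ∏ i ∈ range t, F (c + 1 + i))) := by
  induction s with
  | zero =>
      refine ⟨∏ i ∈ range t, fL (K * d + c + 1 + i), by simp, isL_prod fun i _ => isL_fL _, ?_⟩
      rw [pow_zero, one_mul]
      refine lc_prod fun i _ => ⟨?_, isL_fL _⟩
      have he : K * d + c + 1 + i = K * d + ((c + 1 + i : ℕ) : ℤ) := by push_cast; ring
      rw [he]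
      exact lc_fL_int hd K _
  | succ s ih =>
      obtain ⟨R, hR1, hR2, hR3⟩ := ih
      set u : ℕ := d - 1 - (c + t) with hu
      have hud : u + (c + t) + 1 = d := by omega
      -- split the big product
      have hd' : (u : ℤ) + (c + t) + 1 = d := by omega
      have hsz : (s + 1) * d + t = (s * d + t) + (u + (1 + (c + t))) := by
        have h9 : u + (1 + (c + t)) = d := by omega
        rw [h9]
        ring
      have stepA : (∏ i ∈ range ((s + 1) * d + t), fL (K * d + c + 1 + i))
          = (∏ i ∈ range (s * d + t), fL (K * d + c + 1 + i))
            * ∏ i ∈ range (u + (1 + (c + t))), fL (K * d + c + 1 + ((s * d + t) + i : ℕ)) := by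
        rw [hsz, Finset.prod_range_add]
      have stepB : (∏ i ∈ range (u + (1 + (c + t))), fL (K * d + c + 1 + ((s * d + t) + i : ℕ)))
          = (∏ i ∈ range u, fL (K * d + c + 1 + ((s * d + t) + i : ℕ)))
            * ∏ i ∈ range (1 + (c + t)), fL (K * d + c + 1 + ((s * d + t) + (u + i) : ℕ)) := by
        rw [Finset.prod_range_add]
      have stepC : (∏ i ∈ range u, fL (K * d + c + 1 + ((s * d + t) + i : ℕ)))
          = ∏ i ∈ range u, fL ((K + s) * d + ((c + t + 1 + i : ℕ) : ℤ)) := by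
        refine Finset.prod_congr rfl fun i _ => ?_
        congr 1
        push_cast
        ring
      have stepD : (∏ i ∈ range (1 + (c + t)), fL (K * d + c + 1 + ((s * d + t) + (u + i) : ℕ)))
          = (∏ i ∈ range (c + t), fL (K * d + c + 1 + ((s * d + t) + (u + (i + 1)) : ℕ)))
            * fL (K * d + c + 1 + ((s * d + t) + (u + 0) : ℕ)) := by
        rw [show 1 + (c + t) = (c + t) + 1 by ring, Finset.prod_range_succ']
      have stepE : fL (K * d + c + 1 + ((s * d + t) + (u + 0) : ℕ)) = fL ((K + s + 1) * d) := by
        congr 1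
        push_cast
        linarith
      have stepF : (∏ i ∈ range (c + t), fL (K * d + c + 1 + ((s * d + t) + (u + (i + 1)) : ℕ)))
          = ∏ i ∈ range (c + t), fL ((K + s + 1) * d + ((1 + i : ℕ) : ℤ)) := by
        refine Finset.prod_congr rfl fun i _ => ?_
        congr 1
        push_cast
        linarith
      -- assemble
      set B : RatFunc ℚ :=
        (∏ i ∈ range u, fL ((K + s) * d + ((c + t + 1 + i : ℕ) : ℤ)))
          * ∏ i ∈ range (c + t), fL ((K + s + 1) * d + ((1 + i : ℕ) : ℤ)) with hB
      refine ⟨R * B, ?_, ?_, ?_⟩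
      · rw [stepA, stepB, stepC, stepD, stepE, stepF, hR1, Finset.prod_range_succ]
        ring
      · exact isL_mul hR2 (isL_mul (isL_prod fun i _ => isL_fL _) (isL_prod fun i _ => isL_fL _))
      · -- LC of B towards Wpoly
        have hW : Wpoly d = (∏ i ∈ range (c + t), F (i + 1)) * ∏ i ∈ range u, F (c + t + 1 + i) := by
          rw [Wpoly, show d - 1 = (c + t) + u by omega, Finset.prod_range_add]
          congr 1
          refine Finset.prod_congr rfl fun i _ => ?_
          congr 1
          omega
        have hBW : LC d B (ι (Wpoly d)) := by
          have l1 : LC d (∏ i ∈ range u, fL ((K + s) * d + ((c + t + 1 + i : ℕ) : ℤ)))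
              (ι (∏ i ∈ range u, F (c + t + 1 + i))) := by
            refine lc_prod fun i _ => ⟨lc_fL_int hd (K + s) _, isL_fL _⟩
          have l2 : LC d (∏ i ∈ range (c + t), fL ((K + s + 1) * d + ((1 + i : ℕ) : ℤ)))
              (ι (∏ i ∈ range (c + t), F (1 + i))) := by
            refine lc_prod fun i _ => ⟨lc_fL_int hd (K + s + 1) _, isL_fL _⟩
          have l3 := lc_mul l1 l2 (isL_prod fun i _ => isL_fL _) (isL_iota _)
          rw [← map_mul] at l3
          have l4 : (∏ i ∈ range u, F (c + t + 1 + i)) * (∏ i ∈ range (c + t), F (1 + i))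
              = Wpoly d := by
            rw [hW]
            rw [mul_comm]
            congr 1
            refine Finset.prod_congr rfl fun i _ => ?_
            congr 1
            ring
          rwa [l4] at l3
        have := lc_mul hR3 hBW (isL_mul (isL_prod fun i _ => isL_fL _)
          (isL_prod fun i _ => isL_fL _)) (isL_iota _)
        rw [← map_mul] at this
        have heq : (Wpoly d ^ s * ∏ i ∈ range t, F (c + 1 + i)) * Wpoly d
            = Wpoly d ^ (s + 1) * ∏ i ∈ range t, F (c + 1 + i) := by
          rw [pow_succ]
          ring
        rwa [heq] at this


end ML
end QL

namespace QL
open Polynomial Finset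

section ML2
variable {d : ℕ}

lemma ML2 (hd : 1 < d) (K : ℤ) (c t : ℕ) (h1 : d ≤ c + t) (hc : c + 1 ≤ d) (ht : t + 1 ≤ d)
    (s : ℕ) :
    ∃ R : RatFunc ℚ,
      (∏ i ∈ range (s * d + t), fL (K * d + c + 1 + i))
        = (∏ m ∈ range (s + 1), fL ((K + m + 1) * d)) * R
      ∧ IsL R := by
  set u : ℕ := d - 1 - c with hu
  have huc : u + c + 1 = d := by omega
  have hd' : (u : ℤ) + c + 1 = d := by omega
  set t' : ℕ := c + t - d with ht'
  have htt : t = u + 1 + t' := by omega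
  have hsz : s * d + t = u + 1 + (s * d + t') := by omega
  have stepA : (∏ i ∈ range (s * d + t), fL (K * d + c + 1 + i))
      = (∏ i ∈ range (u + 1), fL (K * d + c + 1 + i))
        * ∏ i ∈ range (s * d + t'), fL (K * d + c + 1 + ((u + 1) + i : ℕ)) := by
    rw [hsz, ← Finset.prod_range_add]
  have hargB : K * d + c + 1 + (u : ℤ) = (K + 1) * d := by push_cast; linear_combination hd'
  have stepB : (∏ i ∈ range (u + 1), fL (K * d + c + 1 + i))
      = (∏ i ∈ range u, fL (K * d + c + 1 + i)) * fL ((K + 1) * d) := by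
    rw [Finset.prod_range_succ, hargB]
  have stepC : (∏ i ∈ range (s * d + t'), fL (K * d + c + 1 + ((u + 1) + i : ℕ)))
      = ∏ i ∈ range (s * d + t'), fL ((K + 1) * d + ((0:ℕ):ℤ) + 1 + i) := by
    refine Finset.prod_congr rfl fun i _ => ?_
    congr 1
    push_cast
    linear_combination hd'
  obtain ⟨R', hR1, hR2, _⟩ := ML hd (K + 1) 0 t' (by omega) s
  refine ⟨(∏ i ∈ range u, fL (K * d + c + 1 + i)) * R', ?_, ?_⟩
  · have hRHS : (∏ m ∈ range (s + 1), fL ((K + m + 1) * d))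
        = fL ((K + 1) * d) * ∏ m ∈ range s, fL ((K + 1 + m + 1) * d) := by
      rw [Finset.prod_range_succ', mul_comm]
      congr 1
      · congr 1
        push_cast
        ring
      · refine Finset.prod_congr rfl fun m _ => ?_
        congr 1
        push_cast
        ring
    rw [stepA, stepB, stepC, hR1, hRHS]
    ring
  · exact isL_mul (isL_prod fun i _ => isL_fL _) hR2

end ML2
end QL

namespace QL
open Polynomial Finset

section QZ

lemma div_div_fix {A B c : RatFunc ℚ} (hc : c ≠ 0) : (A / c) / (B / c) = A / B := by
  rcases eq_or_ne B 0 with rfl | hB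
  · simp
  · field_simp

lemma fL_one_ne_zero : fL (1 : ℤ) ≠ 0 := by
  have := fL_nat_ne_zero (n := 1) (by omega)
  simpa using this

lemma qi_eq (m : ℤ) : qi m = fL m / fL 1 := by
  simp [qi, fL, zpow_one]

lemma qbZ_eq_div (a0 : ℤ) (k : ℕ) :
    qbZ a0 (k : ℤ) = (∏ i ∈ range k, fL (a0 - i)) / (∏ i ∈ range k, fL ((i : ℤ) + 1)) := by
  rw [qbZ, if_neg (by omega)]
  have h1 : (∏ i ∈ range ((k : ℤ)).toNat, qi (a0 - i))
      = (∏ i ∈ range k, fL (a0 - i)) / (fL 1) ^ k := by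
    rw [Int.toNat_natCast]
    calc ∏ i ∈ range k, qi (a0 - i)
        = ∏ i ∈ range k, (fL (a0 - i) / fL 1) := Finset.prod_congr rfl fun i _ => qi_eq _
      _ = (∏ i ∈ range k, fL (a0 - i)) / ∏ _i ∈ range k, fL 1 := Finset.prod_div_distrib _ _
      _ = _ := by rw [Finset.prod_const, card_range]
  have h2 : (∏ i ∈ range ((k : ℤ)).toNat, qi ((i : ℤ) + 1))
      = (∏ i ∈ range k, fL ((i : ℤ) + 1)) / (fL 1) ^ k := by
    rw [Int.toNat_natCast]
    calc ∏ i ∈ range k, qi ((i : ℤ) + 1)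
        = ∏ i ∈ range k, (fL ((i : ℤ) + 1) / fL 1) := Finset.prod_congr rfl fun i _ => qi_eq _
      _ = (∏ i ∈ range k, fL ((i : ℤ) + 1)) / ∏ _i ∈ range k, fL 1 := Finset.prod_div_distrib _ _
      _ = _ := by rw [Finset.prod_const, card_range]
  rw [h1, h2, div_div_fix (pow_ne_zero _ fL_one_ne_zero)]

lemma den_ne_zero (k : ℕ) : (∏ i ∈ range k, fL ((i : ℤ) + 1)) ≠ 0 := by
  refine Finset.prod_ne_zero_iff.mpr fun i _ => ?_
  have : ((i : ℤ) + 1) = ((i + 1 : ℕ) : ℤ) := by push_cast; ring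
  rw [this]
  exact fL_nat_ne_zero (by omega)

lemma qbZ_natCast (n k : ℕ) : qbZ (n : ℤ) (k : ℤ) = ι (gb n k) := by
  rw [qbZ_eq_div]
  by_cases hkn : k ≤ n
  · have hnum : (∏ i ∈ range k, fL ((n : ℤ) - i)) = ι (∏ i ∈ range k, F (n - i)) := by
      rw [map_prod]
      refine Finset.prod_congr rfl fun i hi => ?_
      rw [ι_F]
      congr 1
      have : i < k := mem_range.mp hi
      omega
    have hden : (∏ i ∈ range k, fL ((i : ℤ) + 1)) = ι (∏ i ∈ range k, F (i + 1)) := by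
      rw [map_prod]
      refine Finset.prod_congr rfl fun i hi => ?_
      rw [ι_F]
      norm_cast
    rw [hnum, hden, gb_spec n k, map_mul]
    rw [mul_div_assoc, div_self, mul_one]
    rw [← hden]
    exact den_ne_zero k
  · have hnum : (∏ i ∈ range k, fL ((n : ℤ) - i)) = 0 := by
      refine Finset.prod_eq_zero (mem_range.mpr (show n < k by omega)) ?_
      simp [fL]
    rw [hnum, zero_div, gb_eq_zero (by omega), map_zero]

lemma X_zpow_sum (f : ℕ → ℤ) (n : ℕ) :
    (∏ i ∈ range n, (RatFunc.X : RatFunc ℚ) ^ f i) = RatFunc.X ^ (∑ i ∈ range n, f i) := by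
  induction n with
  | zero => simp
  | succ n ih => rw [Finset.prod_range_succ, Finset.sum_range_succ, ih, zpow_add₀ X_ne]

lemma qbZ_reflect (a0 : ℤ) (k : ℕ) :
    qbZ a0 (k : ℤ)
      = (-1) ^ k * RatFunc.X ^ (∑ i ∈ range k, (a0 - i)) * qbZ ((k : ℤ) - 1 - a0) (k : ℤ) := by
  rw [qbZ_eq_div, qbZ_eq_div]
  have hnum : (∏ i ∈ range k, fL (a0 - i))
      = ((-1) ^ k * RatFunc.X ^ (∑ i ∈ range k, (a0 - i)))
        * ∏ i ∈ range k, fL (((k : ℤ) - 1 - a0) - i) := by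
    have h1 : (∏ i ∈ range k, fL (a0 - i))
        = ∏ i ∈ range k, (-RatFunc.X ^ (a0 - i) * fL ((i : ℤ) - a0)) := by
      refine Finset.prod_congr rfl fun i _ => ?_
      rw [fL_neg (a0 - i)]
      congr 1
      ring
    have h2 : (∏ i ∈ range k, (-RatFunc.X ^ (a0 - i) * fL ((i : ℤ) - a0)))
        = ((-1) ^ k * RatFunc.X ^ (∑ i ∈ range k, (a0 - i)))
          * ∏ i ∈ range k, fL ((i : ℤ) - a0) := by
      rw [Finset.prod_mul_distrib]
      congr 1
      have h3 : (∏ i ∈ range k, (-RatFunc.X ^ (a0 - i)))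
          = (∏ _i ∈ range k, (-1 : RatFunc ℚ)) * ∏ i ∈ range k, RatFunc.X ^ (a0 - i) := by
        rw [← Finset.prod_mul_distrib]
        refine Finset.prod_congr rfl fun i _ => by ring
      rw [h3, Finset.prod_const, card_range, X_zpow_sum]
    have h4 : (∏ i ∈ range k, fL ((i : ℤ) - a0))
        = ∏ i ∈ range k, fL (((k : ℤ) - 1 - a0) - i) := by
      have := Finset.prod_range_reflect (fun i => fL ((i : ℤ) - a0)) k
      rw [← this]
      refine Finset.prod_congr rfl fun i hi => ?_
      congr 1
      have : i < k := mem_range.mp hi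
      omega
    rw [h1, h2, h4]
  rw [hnum, mul_div_assoc]

lemma isL_qbZ (a0 : ℤ) (k : ℕ) : IsL (qbZ a0 (k : ℤ)) := by
  rcases le_or_gt 0 a0 with h | h
  · obtain ⟨n, rfl⟩ : ∃ n : ℕ, a0 = (n : ℤ) := ⟨a0.toNat, by omega⟩
    rw [qbZ_natCast]
    exact isL_iota _
  · rw [qbZ_reflect]
    obtain ⟨m, hm⟩ : ∃ m : ℕ, (k : ℤ) - 1 - a0 = (m : ℤ) := ⟨((k : ℤ) - 1 - a0).toNat, by omega⟩
    rw [hm, qbZ_natCast]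
    refine isL_mul (isL_mul ?_ (isL_X_zpow _)) (isL_iota _)
    obtain ⟨q, e, hq⟩ := isL_one
    exact ⟨(-1) ^ k * q, e, by rw [map_mul, ← hq, map_pow, map_neg, map_one]; ring⟩

lemma desc_eval : ∀ (S : ℕ) (a : ℤ), (descPochhammer ℤ S).eval a = ∏ i ∈ range S, (a - i)
  | 0, a => by simp [descPochhammer_zero]
  | S + 1, a => by
      rw [descPochhammer_succ_right, Polynomial.eval_mul, desc_eval S a, Finset.prod_range_succ]
      simp

end QZ
end QL

namespace QL
open Polynomial Finset

section MAIN
variable {d : ℕ}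

lemma phi_not_dvd_W (hd : 1 < d) : ¬ Polynomial.cyclotomic d ℤ ∣ Wpoly d := by
  intro h
  obtain ⟨r, hr, hdvd⟩ := (phi_prime hd).exists_mem_finset_dvd h
  exact phi_not_dvd_F hd (by omega) (by have := mem_range.mp hr; omega) hdvd

lemma phi_not_dvd_Q (hd : 1 < d) {t : ℕ} (ht : t ≤ d - 1) :
    ¬ Polynomial.cyclotomic d ℤ ∣ ∏ i ∈ range t, F (i + 1) := by
  intro h
  obtain ⟨r, hr, hdvd⟩ := (phi_prime hd).exists_mem_finset_dvd h
  exact phi_not_dvd_F hd (by omega) (by have := mem_range.mp hr; omega) hdvd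

lemma phi_not_dvd_V (hd : 1 < d) {t : ℕ} (ht : t ≤ d - 1) {N0 : ℤ} (hN0 : N0 ≠ 0) (S : ℕ) :
    ¬ Polynomial.cyclotomic d ℤ ∣
      ((N0 : ℤ[X]) * (Wpoly d ^ S * ∏ i ∈ range t, F (i + 1))) := by
  intro h
  rcases (phi_prime hd).2.2 _ _ h with h' | h'
  · exact phi_not_dvd_intCast hd hN0 h'
  rcases (phi_prime hd).2.2 _ _ h' with h'' | h''
  · exact phi_not_dvd_W hd ((phi_prime hd).dvd_of_dvd_pow h'')
  · exact phi_not_dvd_Q hd ht h''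

/-- the descending factorial identity -/
lemma desc_prod_eq (a : ℤ) (S : ℕ) :
    (∏ m ∈ range S, (a - S + m + 1)) = Ring.choose a S * ∏ m ∈ range S, ((m : ℤ) + 1) := by
  have h1 : (∏ m ∈ range S, (a - S + m + 1)) = ∏ i ∈ range S, (a - i) := by
    rw [← Finset.prod_range_reflect (fun i => a - (i : ℤ)) S]
    refine Finset.prod_congr rfl fun i hi => ?_
    have : i < S := mem_range.mp hi
    omega
  have h2 : (∏ m ∈ range S, ((m : ℤ) + 1)) = (S.factorial : ℤ) := by
    norm_cast
    exact Finset.prod_range_add_one_eq_factorial S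
  rw [h1, h2]
  have h3 := Ring.descPochhammer_eq_factorial_smul_choose (R := ℤ) a S
  rw [← Polynomial.eval_eq_smeval] at h3
  rw [desc_eval] at h3
  rw [h3, nsmul_eq_mul]
  ring

end MAIN
end QL

open QL Polynomial Finset

/-- The `q`-Lucas theorem: for `d > 1` and integers `a, b, s, t` with `0 ≤ b, t ≤ d−1`,
`qbinom(ad+b, sd+t) ≡ C(a,s)·qbinom(b,t) (mod Φ_d(q))`, the congruence holding among
Laurent polynomials in `q` (i.e. after clearing a suitable power of `q`, the difference
is `Φ_d(q)` times a polynomial over `ℤ`). -/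
theorem q_lucas (d : ℕ) (hd : 1 < d) (a s : ℤ) (b t : ℕ) (hb : b ≤ d - 1) (ht : t ≤ d - 1) :
    ∃ (p : Polynomial ℤ) (e : ℕ),
      (qbZ (a * d + b) (s * d + t) - (ichoose a s : RatFunc ℚ) * qbZ (b : ℤ) (t : ℤ)) *
          RatFunc.X ^ e
        = algebraMap (Polynomial ℚ) (RatFunc ℚ)
            (Polynomial.cyclotomic d ℚ * p.map (Int.castRingHom ℚ)) := by
  suffices h : LC d (qbZ (a * d + b) (s * d + t))
      ((ichoose a s : RatFunc ℚ) * qbZ (b : ℤ) (t : ℤ)) by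
    obtain ⟨p, e, hp⟩ := h
    refine ⟨p, e, ?_⟩
    rw [hp, ι, RingHom.comp_apply, Polynomial.coe_mapRingHom, Polynomial.map_mul,
      map_cyclotomic_int]
  by_cases hs : s < 0
  · have h0 : qbZ (a * d + b) (s * d + t) = 0 := by
      rw [qbZ, if_pos]
      have h2 : s * (d : ℤ) ≤ -1 * d :=
        mul_le_mul_of_nonneg_right (by omega) (by positivity)
      have h3 : (t : ℤ) ≤ (d : ℤ) - 1 := by omega
      linarith
    have h1 : ichoose a s = 0 := by rw [ichoose, if_pos hs]
    rw [h0, h1]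
    simpa using lc_refl d 0
  -- from now on 0 ≤ s
  push_neg at hs
  obtain ⟨S, rfl⟩ : ∃ S : ℕ, s = (S : ℤ) := ⟨s.toNat, by omega⟩
  set J : ℕ := S * d + t with hJ
  have hJ2 : (S : ℤ) * d + t = (J : ℤ) := by rw [hJ]; push_cast; ring
  set A0 : ℤ := a * d + b with hA0
  rw [hJ2]
  set Num : RatFunc ℚ := ∏ i ∈ range J, fL (A0 - i) with hNumDef
  set Den : RatFunc ℚ := ∏ i ∈ range J, fL ((i : ℤ) + 1) with hDenDef
  have hX : qbZ A0 (J : ℤ) = Num / Den := qbZ_eq_div A0 J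
  have hXDen : qbZ A0 (J : ℤ) * Den = Num := by
    rw [hX, div_mul_cancel₀ _ (den_ne_zero J)]
  -- denominator decomposition via ML
  obtain ⟨R1, hD1, hD2, hD3⟩ := ML hd 0 0 t (by omega) S
  rw [← hJ] at hD1
  have hDen1 : Den = (∏ m ∈ range S, fL ((0 + (m : ℤ) + 1) * d)) * R1 := by
    rw [hDenDef, ← hD1]
    refine Finset.prod_congr rfl fun i _ => ?_
    congr 1
    push_cast
    ring
  have hMD : (∏ m ∈ range S, fL ((0 + (m : ℤ) + 1) * d))
      = fL (d : ℤ) ^ S * ∏ m ∈ range S, GLq d ((m : ℤ) + 1) := by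
    calc (∏ m ∈ range S, fL ((0 + (m : ℤ) + 1) * d))
        = ∏ m ∈ range S, (fL (d : ℤ) * GLq d ((m : ℤ) + 1)) := by
          refine Finset.prod_congr rfl fun m _ => ?_
          rw [show ((0 : ℤ) + m + 1) * d = ((m : ℤ) + 1) * d by ring, fL_eq_GLq hd]
      _ = _ := by rw [Finset.prod_mul_distrib, Finset.prod_const, card_range]
  set u : RatFunc ℚ := (∏ m ∈ range S, GLq d ((m : ℤ) + 1)) * R1 with hu_def
  have hDenu : Den = fL (d : ℤ) ^ S * u := by
    rw [hDen1, hMD, hu_def]; ring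
  have hIsLu : IsL u := isL_mul (isL_prod fun m _ => isL_GLq hd _) hD2
  -- LC target for u
  set N0 : ℤ := ∏ m ∈ range S, ((m : ℤ) + 1) with hN0def
  have hN0 : N0 ≠ 0 := by
    rw [hN0def]
    exact (Finset.prod_pos fun m _ => by positivity).ne'
  set Qt : Polynomial ℤ := ∏ i ∈ range t, F (i + 1) with hQt
  have hD3' : LC d R1 (ι (Wpoly d ^ S * Qt)) := by
    have heq : (∏ i ∈ range t, F (0 + 1 + i)) = Qt := by
      rw [hQt]
      refine Finset.prod_congr rfl fun i _ => ?_
      congr 1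
      omega
    rwa [heq] at hD3
  have hGLden : LC d (∏ m ∈ range S, GLq d ((m : ℤ) + 1)) (ι ((N0 : Polynomial ℤ))) := by
    have h7 := lc_prod (d := d) (n := S) (f := fun m => GLq d ((m : ℤ) + 1))
      (g := fun m => (((m : ℤ) + 1 : ℤ) : Polynomial ℤ)) (fun m _ => ⟨lc_GLq hd _, isL_GLq hd _⟩)
    have h8 : (∏ m ∈ range S, (((m : ℤ) + 1 : ℤ) : Polynomial ℤ)) = ((N0 : Polynomial ℤ)) := by
      rw [hN0def]
      push_cast
      ring
    rwa [h8] at h7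
  set Vu : Polynomial ℤ := (N0 : Polynomial ℤ) * (Wpoly d ^ S * Qt) with hVu
  have hulc : LC d u (ι Vu) := by
    have h9 := lc_mul hGLden hD3' hD2 (isL_iota _)
    rw [← map_mul] at h9
    exact h9
  have hV : ¬ Polynomial.cyclotomic d ℤ ∣ Vu := by
    rw [hVu, hQt]
    exact phi_not_dvd_V hd ht hN0 S
  by_cases htb : t ≤ b
  · -- main case
    set K : ℤ := a - S with hK
    set c : ℕ := b - t with hc
    have hNum : Num = ∏ i ∈ range J, fL (K * d + (c : ℤ) + 1 + i) := by
      rw [hNumDef, ← Finset.prod_range_reflect (fun i => fL (A0 - i)) J]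
      refine Finset.prod_congr rfl fun i hi => ?_
      congr 1
      have hi' : i < J := mem_range.mp hi
      have h1 : ((J - 1 - i : ℕ) : ℤ) = (J : ℤ) - 1 - i := by omega
      have h2 : ((c : ℕ) : ℤ) = (b : ℤ) - t := by omega
      have h3 : (J : ℤ) = (S : ℤ) * d + t := by rw [hJ]; push_cast; ring
      rw [h1, h2, h3, hA0, hK]
      ring
    obtain ⟨R2, hN1, hN2, hN3⟩ := ML hd K c t (by omega) S
    rw [← hJ] at hN1
    have hMN : (∏ m ∈ range S, fL ((K + (m : ℤ) + 1) * d))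
        = fL (d : ℤ) ^ S * ∏ m ∈ range S, GLq d (K + (m : ℤ) + 1) := by
      calc (∏ m ∈ range S, fL ((K + (m : ℤ) + 1) * d))
          = ∏ m ∈ range S, (fL (d : ℤ) * GLq d (K + (m : ℤ) + 1)) :=
            Finset.prod_congr rfl fun m _ => fL_eq_GLq hd _
        _ = _ := by rw [Finset.prod_mul_distrib, Finset.prod_const, card_range]
    set v : RatFunc ℚ := (∏ m ∈ range S, GLq d (K + (m : ℤ) + 1)) * R2 with hvdef
    have hNv : Num = fL (d : ℤ) ^ S * v := by
      rw [hNum, hN1, hMN, hvdef]; ring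
    have hXu : qbZ A0 (J : ℤ) * u = v := by
      refine mul_left_cancel₀ (pow_ne_zero S (fL_d_ne_zero hd)) ?_
      calc fL (d : ℤ) ^ S * (qbZ A0 (J : ℤ) * u)
          = qbZ A0 (J : ℤ) * (fL (d : ℤ) ^ S * u) := by ring
        _ = qbZ A0 (J : ℤ) * Den := by rw [← hDenu]
        _ = Num := hXDen
        _ = fL (d : ℤ) ^ S * v := hNv
    -- LC of v
    set Pint : ℤ := ∏ m ∈ range S, (K + (m : ℤ) + 1) with hPint
    have hGLnum : LC d (∏ m ∈ range S, GLq d (K + (m : ℤ) + 1)) (ι ((Pint : Polynomial ℤ))) := by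
      have h7 := lc_prod (d := d) (n := S) (f := fun m => GLq d (K + (m : ℤ) + 1))
        (g := fun m => ((K + (m : ℤ) + 1 : ℤ) : Polynomial ℤ))
        (fun m _ => ⟨lc_GLq hd _, isL_GLq hd _⟩)
      have h8 : (∏ m ∈ range S, ((K + (m : ℤ) + 1 : ℤ) : Polynomial ℤ))
          = ((Pint : Polynomial ℤ)) := by
        rw [hPint]
        push_cast
        ring
      rwa [h8] at h7
    set Bt : Polynomial ℤ := ∏ i ∈ range t, F (c + 1 + i) with hBt
    have hvlc : LC d v (ι ((Pint : Polynomial ℤ) * (Wpoly d ^ S * Bt))) := by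
      have h9 := lc_mul hGLnum hN3 hN2 (isL_iota _)
      rw [← map_mul] at h9
      exact h9
    -- choose identity
    have hPch : Pint = Ring.choose a S * N0 := by
      rw [hPint, hN0def]
      have h10 := desc_prod_eq a S
      rw [← h10]
    -- gb identity
    have hBtgb : Bt = gb b t * Qt := by
      rw [hBt, hQt, ← gb_spec b t, ← Finset.prod_range_reflect (fun i => F (b - i)) t]
      refine Finset.prod_congr rfl fun i hi => ?_
      congr 1
      have := mem_range.mp hi
      omega
    -- Y
    have hch : (ichoose a (S : ℤ) : ℤ) = Ring.choose a S := by
      rw [ichoose, if_neg (by omega)]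
      congr 1
    have hYeq : ((ichoose a (S : ℤ) : ℤ) : RatFunc ℚ) * qbZ (b : ℤ) (t : ℤ)
        = ι (((ichoose a (S : ℤ) : ℤ) : Polynomial ℤ) * gb b t) := by
      rw [map_mul, map_intCast, qbZ_natCast]
    have hbridge : (Pint : Polynomial ℤ) * (Wpoly d ^ S * Bt)
        = ((ichoose a (S : ℤ) : ℤ) : Polynomial ℤ) * gb b t * Vu := by
      rw [hPch, hBtgb, hVu, hch]
      push_cast
      ring
    have hYlc : LC d (((ichoose a (S : ℤ) : ℤ) : RatFunc ℚ) * qbZ (b : ℤ) (t : ℤ))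
        (ι (((ichoose a (S : ℤ) : ℤ) : Polynomial ℤ) * gb b t)) := by
      rw [hYeq]
      exact lc_refl d _
    have hYu : LC d ((((ichoose a (S : ℤ) : ℤ) : RatFunc ℚ) * qbZ (b : ℤ) (t : ℤ)) * u)
        (ι ((((ichoose a (S : ℤ) : ℤ) : Polynomial ℤ) * gb b t) * Vu)) := by
      have h11 := lc_mul hYlc hulc hIsLu (isL_iota _)
      rw [← map_mul] at h11
      exact h11
    have hXulc : LC d (qbZ A0 (J : ℤ) * u)
        (ι ((((ichoose a (S : ℤ) : ℤ) : Polynomial ℤ) * gb b t) * Vu)) := by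
      rw [hXu, ← hbridge]
      exact hvlc
    have hfinal : LC d (qbZ A0 (J : ℤ) * u)
        ((((ichoose a (S : ℤ) : ℤ) : RatFunc ℚ) * qbZ (b : ℤ) (t : ℤ)) * u) :=
      lc_trans hXulc (lc_symm hYu)
    have hYisL : IsL (((ichoose a (S : ℤ) : ℤ) : RatFunc ℚ) * qbZ (b : ℤ) (t : ℤ)) := by
      rw [hYeq]
      exact isL_iota _
    exact lc_cancel hd (isL_qbZ A0 J) hYisL hIsLu hulc hV hfinal
  · -- case t > b : everything vanishes mod Φ
    push_neg at htb
    set K : ℤ := a - S - 1 with hK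
    set c : ℕ := d + b - t with hc
    have hNum : Num = ∏ i ∈ range J, fL (K * d + (c : ℤ) + 1 + i) := by
      rw [hNumDef, ← Finset.prod_range_reflect (fun i => fL (A0 - i)) J]
      refine Finset.prod_congr rfl fun i hi => ?_
      congr 1
      have hi' : i < J := mem_range.mp hi
      have h1 : ((J - 1 - i : ℕ) : ℤ) = (J : ℤ) - 1 - i := by omega
      have h2 : ((c : ℕ) : ℤ) = (d : ℤ) + b - t := by omega
      have h3 : (J : ℤ) = (S : ℤ) * d + t := by rw [hJ]; push_cast; ring
      rw [h1, h2, h3, hA0, hK]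
      ring
    obtain ⟨R2, hN1, hN2⟩ := ML2 hd K c t (by omega) (by omega) (by omega) S
    rw [← hJ] at hN1
    have hMN : (∏ m ∈ range (S + 1), fL ((K + (m : ℤ) + 1) * d))
        = fL (d : ℤ) ^ (S + 1) * ∏ m ∈ range (S + 1), GLq d (K + (m : ℤ) + 1) := by
      calc (∏ m ∈ range (S + 1), fL ((K + (m : ℤ) + 1) * d))
          = ∏ m ∈ range (S + 1), (fL (d : ℤ) * GLq d (K + (m : ℤ) + 1)) :=
            Finset.prod_congr rfl fun m _ => fL_eq_GLq hd _
        _ = _ := by rw [Finset.prod_mul_distrib, Finset.prod_const, card_range]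
    set v : RatFunc ℚ := (∏ m ∈ range (S + 1), GLq d (K + (m : ℤ) + 1)) * R2 with hvdef
    have hNv : Num = fL (d : ℤ) ^ (S + 1) * v := by
      rw [hNum, hN1, hMN, hvdef]; ring
    have hXu : qbZ A0 (J : ℤ) * u = fL (d : ℤ) * v := by
      refine mul_left_cancel₀ (pow_ne_zero S (fL_d_ne_zero hd)) ?_
      calc fL (d : ℤ) ^ S * (qbZ A0 (J : ℤ) * u)
          = qbZ A0 (J : ℤ) * (fL (d : ℤ) ^ S * u) := by ring
        _ = qbZ A0 (J : ℤ) * Den := by rw [← hDenu]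
        _ = Num := hXDen
        _ = fL (d : ℤ) ^ S * (fL (d : ℤ) * v) := by rw [hNv]; ring
    have hvIsL : IsL v :=
      isL_mul (isL_prod fun m _ => isL_GLq hd _) hN2
    have hXu0 : LC d (qbZ A0 (J : ℤ) * u) 0 := by
      rw [hXu, show fL ((d : ℕ) : ℤ) = ι (F d) from (ι_F d).symm]
      refine lc_dvd_zero ?_ hvIsL
      have := phi_dvd_F_mul (d := d) 1
      rwa [one_mul] at this
    have hqbZbt : qbZ (b : ℤ) (t : ℤ) = 0 := by
      rw [qbZ_natCast, gb_eq_zero htb, map_zero]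
    rw [hqbZbt, mul_zero]
    have hfinal : LC d (qbZ A0 (J : ℤ) * u) (0 * u) := by
      rw [zero_mul]
      exact hXu0
    exact lc_cancel hd (isL_qbZ A0 J) isL_zero hIsLu hulc hV hfinal
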